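/- Let Y be a binomial random variable B(n, p) with ζ ≤ p ≤ 1 − ζ for 0 < ζ < 1/2 and n ≥ 1. Then the maximum over k of Pr[Y = k] (the probability at the mode) is at most (e/(2πζ√n))·(1 + 1/(ζn)). -/

import Mathlib

open Real Filter

noncomputable def binomProb (n : ℕ) (p : ℝ) (k : ℕ) : ℝ :=
  (n.choose k : ℝ) * p ^ k * (1 - p) ^ (n - k)



lemma stirling_lower (m : ℕ) (hm : 1 ≤ m) :
    Real.sqrt π ≤ Stirling.stirlingSeq m := by
  obtain ⟨j, rfl⟩ := Nat.exists_eq_add_of_le hm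
  have h1 : Tendsto (Stirling.stirlingSeq ∘ Nat.succ) atTop (nhds (Real.sqrt π)) :=
    Stirling.tendsto_stirlingSeq_sqrt_pi.comp (tendsto_add_atTop_nat 1)
  have := Stirling.stirlingSeq'_antitone.le_of_tendsto h1 j
  simpa [Nat.add_comm] using this

lemma fact_upper (n : ℕ) (hn : 1 ≤ n) :
    (Nat.factorial n : ℝ) ≤ Real.exp 1 * Real.sqrt n * ((n : ℝ) / Real.exp 1) ^ n := by
  obtain ⟨j, rfl⟩ := Nat.exists_eq_add_of_le hn
  have h1 : Stirling.stirlingSeq (1 + j) ≤ Stirling.stirlingSeq 1 := by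
    have := Stirling.stirlingSeq'_antitone (Nat.zero_le j)
    simpa [Nat.add_comm] using this
  rw [Stirling.stirlingSeq_one] at h1
  have hpos : (0:ℝ) < Real.sqrt (2 * (1+j : ℕ)) * (((1+j : ℕ):ℝ) / Real.exp 1) ^ (1+j) := by
    positivity
  have h2 : ((Nat.factorial (1+j)) : ℝ) = Stirling.stirlingSeq (1+j) * (Real.sqrt (2 * (1+j : ℕ)) * (((1+j : ℕ):ℝ) / Real.exp 1) ^ (1+j)) := by
    rw [Stirling.stirlingSeq, div_mul_cancel₀]
    exact ne_of_gt hpos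
  rw [h2]
  have h3 : Real.sqrt (2 * ((1+j : ℕ):ℝ)) = Real.sqrt 2 * Real.sqrt ((1+j : ℕ):ℝ) :=
    Real.sqrt_mul (by norm_num) _
  calc Stirling.stirlingSeq (1+j) * (Real.sqrt (2 * (1+j : ℕ)) * (((1+j : ℕ):ℝ) / Real.exp 1) ^ (1+j))
      ≤ (Real.exp 1 / Real.sqrt 2) * (Real.sqrt (2 * (1+j : ℕ)) * (((1+j : ℕ):ℝ) / Real.exp 1) ^ (1+j)) := by
        apply mul_le_mul_of_nonneg_right h1 (le_of_lt hpos)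
    _ = Real.exp 1 * Real.sqrt ((1+j:ℕ):ℝ) * (((1+j : ℕ):ℝ) / Real.exp 1) ^ (1+j) := by
        rw [h3]
        have h2 : Real.sqrt 2 ≠ 0 := by positivity
        field_simp

lemma fact_lower (m : ℕ) (hm : 1 ≤ m) :
    Real.sqrt (2 * π * m) * ((m:ℝ) / Real.exp 1) ^ m ≤ (Nat.factorial m : ℝ) := by
  have h1 := stirling_lower m hm
  have hpos : (0:ℝ) < Real.sqrt (2 * (m : ℕ)) * (((m : ℕ):ℝ) / Real.exp 1) ^ m := by
    have : (0:ℝ) < m := by exact_mod_cast hm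
    positivity
  have h2 : ((Nat.factorial m) : ℝ) = Stirling.stirlingSeq m * (Real.sqrt (2 * (m : ℕ)) * (((m : ℕ):ℝ) / Real.exp 1) ^ m) := by
    rw [Stirling.stirlingSeq, div_mul_cancel₀]
    exact ne_of_gt hpos
  rw [h2]
  have h3 : Real.sqrt (2 * π * m) = Real.sqrt π * Real.sqrt (2 * m) := by
    rw [← Real.sqrt_mul (by positivity)]
    ring_nf
  rw [h3, mul_assoc]
  apply mul_le_mul_of_nonneg_right h1 (le_of_lt hpos)


-- R ≤ 1 : p^a q^b ≤ (a/n)^a (b/n)^b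
lemma pow_prob_le (a b : ℕ) (ha : 1 ≤ a) (hb : 1 ≤ b) (p : ℝ) (hp0 : 0 ≤ p) (hp1 : p ≤ 1) :
    p ^ a * (1-p) ^ b ≤ ((a:ℝ)/((a:ℝ)+b))^a * ((b:ℝ)/((a:ℝ)+b))^b := by
  have ha0 : (0:ℝ) < a := by exact_mod_cast ha
  have hb0 : (0:ℝ) < b := by exact_mod_cast hb
  have hn0 : (0:ℝ) < (a:ℝ) + b := by linarith
  set x : ℝ := (a:ℝ)/((a:ℝ)+b) with hx
  set y : ℝ := (b:ℝ)/((a:ℝ)+b) with hy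
  have hx0 : 0 < x := by positivity
  have hy0 : 0 < y := by positivity
  have hxy : x + y = 1 := by rw [hx, hy]; field_simp
  have hq0 : 0 ≤ 1 - p := by linarith
  have hp' : 0 ≤ p/x := div_nonneg hp0 hx0.le
  have hq' : 0 ≤ (1-p)/y := div_nonneg hq0 hy0.le
  have hu : (p/x) ^ (x:ℝ) * ((1-p)/y) ^ (y:ℝ) ≤ 1 := by
    have := Real.geom_mean_le_arith_mean2_weighted hx0.le hy0.le hp' hq' hxy
    calc (p/x) ^ (x:ℝ) * ((1-p)/y) ^ (y:ℝ) ≤ x * (p/x) + y * ((1-p)/y) := this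
      _ = 1 := by field_simp; ring
  have hu0 : (0:ℝ) ≤ (p/x) ^ (x:ℝ) * ((1-p)/y) ^ (y:ℝ) := by positivity
  set n : ℕ := a + b with hn
  have hun : ((p/x) ^ (x:ℝ) * ((1-p)/y) ^ (y:ℝ)) ^ (n:ℕ) ≤ 1 :=
    pow_le_one₀ hu0 hu
  have hxn : x * (n:ℝ) = (a:ℝ) := by
    rw [hx, hn]; push_cast; field_simp
  have hyn : y * (n:ℝ) = (b:ℝ) := by
    rw [hy, hn]; push_cast; field_simp
  have hexp : ((p/x) ^ (x:ℝ) * ((1-p)/y) ^ (y:ℝ)) ^ (n:ℕ) = (p/x)^a * ((1-p)/y)^b := by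
    rw [mul_pow, ← Real.rpow_natCast ((p/x) ^ (x:ℝ)) n, ← Real.rpow_natCast (((1-p)/y) ^ (y:ℝ)) n,
        ← Real.rpow_mul hp', ← Real.rpow_mul hq', hxn, hyn,
        Real.rpow_natCast, Real.rpow_natCast]
  rw [hexp] at hun
  have key : p^a * (1-p)^b = ((p/x)^a * ((1-p)/y)^b) * (x^a * y^b) := by
    rw [div_pow p x a, div_pow (1-p) y b, mul_mul_mul_comm, div_mul_cancel₀ _ (pow_ne_zero a hx0.ne'),
      div_mul_cancel₀ _ (pow_ne_zero b hy0.ne')]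
  rw [key]
  calc ((p/x)^a * ((1-p)/y)^b) * (x^a * y^b) ≤ 1 * (x^a * y^b) := by
        apply mul_le_mul_of_nonneg_right hun (by positivity)
    _ = x^a * y^b := one_mul _

lemma choose_bound (a b : ℕ) (ha : 1 ≤ a) (hb : 1 ≤ b) :
    ((a+b).choose a : ℝ) * (((a:ℝ)/((a:ℝ)+b))^a * ((b:ℝ)/((a:ℝ)+b))^b)
      ≤ Real.exp 1 * Real.sqrt ((a:ℝ)+(b:ℝ)) / (2*π*(Real.sqrt a * Real.sqrt b)) := by
  have ha0 : (0:ℝ) < a := by exact_mod_cast ha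
  have hb0 : (0:ℝ) < b := by exact_mod_cast hb
  have hn0 : (0:ℝ) < (a:ℝ) + b := by linarith
  have hcast : (((a+b : ℕ)):ℝ) = (a:ℝ) + b := by push_cast; ring
  set A : ℝ := Real.sqrt (2*π*a) * ((a:ℝ)/Real.exp 1)^a with hA
  set B : ℝ := Real.sqrt (2*π*b) * ((b:ℝ)/Real.exp 1)^b with hB
  set U : ℝ := Real.exp 1 * Real.sqrt ((a:ℝ)+b) * (((a:ℝ)+b) / Real.exp 1) ^ (a+b) with hU
  have hA0 : 0 < A := by rw [hA]; positivity
  have hB0 : 0 < B := by rw [hB]; positivity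
  have hAf : A ≤ (Nat.factorial a : ℝ) := fact_lower a ha
  have hBf : B ≤ (Nat.factorial b : ℝ) := fact_lower b hb
  have hUf : ((Nat.factorial (a+b)) : ℝ) ≤ U := by
    have := fact_upper (a+b) (by omega)
    rw [hU]; rw [hcast] at this; exact this
  have hch : ((a+b).choose a : ℝ) * ((Nat.factorial a : ℝ) * (Nat.factorial b : ℝ))
      = ((Nat.factorial (a+b)) : ℝ) := by
    have h := Nat.choose_mul_factorial_mul_factorial (Nat.le_add_right a b)
    rw [Nat.add_sub_cancel_left] at h
    push_cast [← h]
    ring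
  have hC0 : (0:ℝ) ≤ ((a+b).choose a : ℝ) := by positivity
  have h1 : ((a+b).choose a : ℝ) * (A * B) ≤ U := by
    calc ((a+b).choose a : ℝ) * (A * B) ≤ ((a+b).choose a : ℝ) * ((Nat.factorial a : ℝ) * (Nat.factorial b : ℝ)) := by
          apply mul_le_mul_of_nonneg_left _ hC0
          exact mul_le_mul hAf hBf hB0.le (by positivity)
      _ = ((Nat.factorial (a+b)) : ℝ) := hch
      _ ≤ U := hUf
  set X : ℝ := ((a:ℝ)/((a:ℝ)+b))^a * ((b:ℝ)/((a:ℝ)+b))^b with hX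
  set T : ℝ := Real.exp 1 * Real.sqrt ((a:ℝ)+(b:ℝ)) / (2*π*(Real.sqrt a * Real.sqrt b)) with hT
  have hX0 : 0 < X := by rw [hX]; positivity
  have hid : U * X = T * (A * B) := by
    rw [hU, hX, hT, hA, hB]
    have s1 : Real.sqrt (2*π*(a:ℝ)) = Real.sqrt (2*π) * Real.sqrt a := by
      rw [← Real.sqrt_mul (by positivity)]
    have s2 : Real.sqrt (2*π*(b:ℝ)) = Real.sqrt (2*π) * Real.sqrt b := by
      rw [← Real.sqrt_mul (by positivity)]
    have s3 : Real.sqrt (2*π) * Real.sqrt (2*π) = 2*π := Real.mul_self_sqrt (by positivity)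
    rw [s1, s2]
    set w : ℝ := Real.sqrt (2*π) with hw
    rw [← s3]
    have he : Real.exp 1 ≠ 0 := (Real.exp_pos 1).ne'
    have hw0 : w ≠ 0 := by rw [hw]; positivity
    have hsa : Real.sqrt (a:ℝ) ≠ 0 := by positivity
    have hsb : Real.sqrt (b:ℝ) ≠ 0 := by positivity
    rw [div_pow, div_pow, div_pow, pow_add, pow_add]
    field_simp
    rw [div_pow, div_pow, mul_comm (rexp 1 ^ a) (rexp 1 ^ b), mul_assoc (rexp 1 ^ b),
      mul_div_cancel₀ _ (pow_ne_zero a he), mul_comm (rexp 1 ^ b), mul_assoc,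
      mul_div_cancel₀ _ (pow_ne_zero b he)]
  have hT0 : 0 < T := by
    rw [hT]
    have : (0:ℝ) < π := Real.pi_pos
    positivity
  calc ((a+b).choose a : ℝ) * X = (((a+b).choose a : ℝ) * (A*B)) * X / (A*B) := by
        field_simp
    _ ≤ U * X / (A*B) := by
        apply div_le_div_of_nonneg_right ?_ (by positivity)
        exact mul_le_mul_of_nonneg_right h1 hX0.le
    _ = T := by rw [hid]; field_simp

lemma binomProb_nonneg (n : ℕ) (p : ℝ) (hp0 : 0 ≤ p) (hp1 : p ≤ 1) (k : ℕ) :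
    0 ≤ binomProb n p k := by
  unfold binomProb
  have : (0:ℝ) ≤ 1 - p := by linarith
  positivity

-- step up: below the mode the pmf increases
lemma binom_step_up (n : ℕ) (p : ℝ) (hp0 : 0 < p) (hp1 : p < 1) (k : ℕ)
    (hk : k < n) (hcond : (k:ℝ) + 1 ≤ ((n:ℝ)+1) * p) :
    binomProb n p k ≤ binomProb n p (k+1) := by
  unfold binomProb
  have hq0 : (0:ℝ) < 1 - p := by linarith
  have hnk : n - k = (n - (k+1)) + 1 := by omega
  rw [hnk, pow_succ]
  have hc : ((n.choose (k+1)):ℝ) * ((k:ℝ)+1) = ((n.choose k):ℝ) * ((n:ℝ)-(k:ℝ)) := by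
    have h := congrArg (Nat.cast (R := ℝ)) (Nat.choose_succ_right_eq n k)
    push_cast [Nat.cast_sub hk.le] at h
    linarith
  have hkey : ((n.choose k):ℝ) * (1-p) ≤ ((n.choose (k+1)):ℝ) * p := by
    have hC0 : (0:ℝ) < ((n.choose k):ℝ) := by
      exact_mod_cast Nat.choose_pos hk.le
    have h2 : ((k:ℝ)+1) * (1-p) ≤ ((n:ℝ)-(k:ℝ)) * p := by nlinarith
    have hk0 : (0:ℝ) < (k:ℝ)+1 := by positivity
    nlinarith [mul_le_mul_of_nonneg_left h2 hC0.le]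
  calc ((n.choose k):ℝ) * p^k * ((1-p)^(n-(k+1)) * (1-p))
      = (((n.choose k):ℝ) * (1-p)) * (p^k * (1-p)^(n-(k+1))) := by ring
    _ ≤ (((n.choose (k+1)):ℝ) * p) * (p^k * (1-p)^(n-(k+1))) := by
        apply mul_le_mul_of_nonneg_right hkey (by positivity)
    _ = ((n.choose (k+1)):ℝ) * p^(k+1) * (1-p)^(n-(k+1)) := by ring

-- step down: at/above the mode the pmf decreases
lemma binom_step_down (n : ℕ) (p : ℝ) (hp0 : 0 < p) (hp1 : p < 1) (k : ℕ)
    (hcond : ((n:ℝ)+1) * p ≤ (k:ℝ) + 1) :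
    binomProb n p (k+1) ≤ binomProb n p k := by
  have hq0 : (0:ℝ) < 1 - p := by linarith
  rcases lt_or_ge k n with hk | hk
  · unfold binomProb
    have hnk : n - k = (n - (k+1)) + 1 := by omega
    rw [hnk, pow_succ]
    have hc : ((n.choose (k+1)):ℝ) * ((k:ℝ)+1) = ((n.choose k):ℝ) * ((n:ℝ)-(k:ℝ)) := by
      have h := congrArg (Nat.cast (R := ℝ)) (Nat.choose_succ_right_eq n k)
      push_cast [Nat.cast_sub hk.le] at h
      linarith
    have hkey : ((n.choose (k+1)):ℝ) * p ≤ ((n.choose k):ℝ) * (1-p) := by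
      have hC0 : (0:ℝ) ≤ ((n.choose (k+1)):ℝ) := by positivity
      have h2 : ((n:ℝ)-(k:ℝ)) * p ≤ ((k:ℝ)+1) * (1-p) := by nlinarith
      have hk0 : (0:ℝ) < (k:ℝ)+1 := by positivity
      nlinarith [mul_le_mul_of_nonneg_left h2 (by positivity : (0:ℝ) ≤ ((n.choose (k+1)):ℝ))]
    calc ((n.choose (k+1)):ℝ) * p^(k+1) * (1-p)^(n-(k+1))
        = (((n.choose (k+1)):ℝ) * p) * (p^k * (1-p)^(n-(k+1))) := by ring
      _ ≤ (((n.choose k):ℝ) * (1-p)) * (p^k * (1-p)^(n-(k+1))) := by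
          apply mul_le_mul_of_nonneg_right hkey (by positivity)
      _ = ((n.choose k):ℝ) * p^k * ((1-p)^(n-(k+1)) * (1-p)) := by ring
  · have h0 : binomProb n p (k+1) = 0 := by
      unfold binomProb
      have : n.choose (k+1) = 0 := Nat.choose_eq_zero_of_lt (by omega)
      rw [this]; simp
    rw [h0]
    exact binomProb_nonneg n p hp0.le hp1.le k

lemma binom_le_mode (n : ℕ) (p : ℝ) (hp0 : 0 < p) (hp1 : p < 1) (k : ℕ) :
    binomProb n p k ≤ binomProb n p (Nat.floor (((n:ℝ)+1) * p)) := by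
  set M := Nat.floor (((n:ℝ)+1) * p) with hM
  have hMle : (M:ℝ) ≤ ((n:ℝ)+1) * p := Nat.floor_le (by positivity)
  have hMgt : ((n:ℝ)+1) * p < (M:ℝ) + 1 := Nat.lt_floor_add_one _
  have hMn : M ≤ n := by
    have : ((n:ℝ)+1)*p < (n:ℝ)+1 := by nlinarith
    have h2 : (M:ℝ) < (n:ℝ)+1 := lt_of_le_of_lt hMle this
    exact_mod_cast Nat.lt_succ_iff.mp (by exact_mod_cast h2)
  have up : ∀ d, binomProb n p (M - d) ≤ binomProb n p M := by
    intro d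
    induction d with
    | zero => simp
    | succ d ih =>
      rcases le_or_gt M d with h | h
      · have : M - (d+1) = M - d := by omega
        rw [this]; exact ih
      · have h1 : M - (d+1) < M := by omega
        have h2 : (M - (d+1)) + 1 = M - d := by omega
        have hklt : M - (d+1) < n := by omega
        have hcond : ((M - (d+1) : ℕ):ℝ) + 1 ≤ ((n:ℝ)+1)*p := by
          have : ((M - (d+1) : ℕ):ℝ) + 1 ≤ (M:ℝ) := by exact_mod_cast by omega
          linarith
        calc binomProb n p (M-(d+1)) ≤ binomProb n p ((M-(d+1))+1) :=
              binom_step_up n p hp0 hp1 _ hklt hcond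
          _ = binomProb n p (M - d) := by rw [h2]
          _ ≤ _ := ih
  have down : ∀ d, binomProb n p (M + d) ≤ binomProb n p M := by
    intro d
    induction d with
    | zero => simp
    | succ d ih =>
      have hcond : ((n:ℝ)+1)*p ≤ ((M + d : ℕ):ℝ) + 1 := by
        have : (M:ℝ) ≤ ((M + d : ℕ):ℝ) := by exact_mod_cast by omega
        linarith
      have : M + (d+1) = (M + d) + 1 := by omega
      rw [this]
      exact le_trans (binom_step_down n p hp0 hp1 _ hcond) ih
  rcases le_total k M with h | h
  · have : k = M - (M - k) := by omega
    rw [this]; exact up _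
  · have : k = M + (k - M) := by omega
    rw [this]; exact down _

-- key polynomial inequality
lemma key_ineq (t a b nn : ℝ) (ht : 0 < t) (htn : 2*t < nn) (hab : a + b = nn)
    (ha1 : 1 ≤ a) (hb1 : 1 ≤ b) (hat : t - 1 ≤ a) (hbt : t - 1 ≤ b) :
    t^4 ≤ a*b*(t+1)^2 := by
  rcases le_or_gt (t^2) (t+1) with h | h
  · have hab1 : 1 ≤ a*b := by nlinarith
    nlinarith [mul_nonneg (sub_nonneg.2 h) (by positivity : (0:ℝ) ≤ t + 1 + t^2), sq_nonneg (t+1)]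
  · have ht1 : 1 < t := by nlinarith
    have h1 : 0 ≤ (a - (t-1)) * (b - (t-1)) := by nlinarith
    have habl : (t-1)*(nn-t+1) ≤ a*b := by nlinarith
    nlinarith [mul_pos ht ht, mul_lt_mul_of_pos_left h ht, sq_nonneg (t+1),
      mul_le_mul_of_nonneg_right habl (by positivity : (0:ℝ) ≤ (t+1)^2),
      mul_pos (mul_pos ht ht) ht]


lemma edge_bound (n : ℕ) (hn : 1 ≤ n) (ζ : ℝ) (hζ0 : 0 < ζ) (hζ : ζ < 1/2) :
    (1-ζ)^n ≤ (Real.exp 1 / (2 * π * ζ * Real.sqrt n)) * (1 + 1 / (ζ * n)) := by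
  have hn0 : (0:ℝ) < n := by exact_mod_cast hn
  set t : ℝ := ζ * n with htdef
  have ht0 : 0 < t := by positivity
  have h1 : (1-ζ)^n ≤ Real.exp (-t) := by
    calc (1-ζ)^n ≤ (Real.exp (-ζ))^n := by
          apply pow_le_pow_left₀ (by linarith) _ n
          linarith [Real.add_one_le_exp (-ζ)]
      _ = Real.exp (-t) := by
          rw [← Real.exp_nat_mul]; congr 1; rw [htdef]; ring
  have h2 : Real.exp (-t) * t ≤ Real.exp (-1) := by
    have h3 := Real.add_one_le_exp (t - 1)
    have h4 : t ≤ Real.exp t * Real.exp (-1) := by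
      rw [← Real.exp_add]
      calc t = (t-1) + 1 := by ring
        _ ≤ Real.exp (t - 1) := h3
        _ = Real.exp (t + -1) := by ring_nf
    calc Real.exp (-t) * t ≤ Real.exp (-t) * (Real.exp t * Real.exp (-1)) := by
          apply mul_le_mul_of_nonneg_left h4 (Real.exp_pos _).le
      _ = Real.exp (-1) := by rw [← Real.exp_add, ← Real.exp_add]; congr 1; ring
  have hpi : (0:ℝ) < π := Real.pi_pos
  have h3 : 2 * π ≤ Real.exp 1 ^ 2 := by
    nlinarith [Real.pi_lt_d2, Real.exp_one_gt_d9]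
  have hs0 : (0:ℝ) < Real.sqrt n := Real.sqrt_pos.2 hn0
  have hn1 : (1:ℝ) ≤ n := by exact_mod_cast hn
  have hsn : Real.sqrt n ≤ n := by
    calc Real.sqrt n ≤ Real.sqrt ((n:ℝ)^2) := Real.sqrt_le_sqrt (by nlinarith)
      _ = n := Real.sqrt_sq hn0.le
  -- exp(-t) ≤ exp(-1)/t ≤ e/(2π t) ≤ e/(2π ζ √n) ≤ RHS
  have step1 : Real.exp (-t) ≤ Real.exp (-1) / t := by
    rw [le_div_iff₀ ht0]; exact h2
  have step2 : Real.exp (-1) / t ≤ Real.exp 1 / (2 * π * t) := by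
    rw [div_le_div_iff₀ ht0 (by positivity)]
    have he : Real.exp (-1) * Real.exp 1 = 1 := by rw [← Real.exp_add]; simp
    have he2 : Real.exp (-1) * Real.exp 1 ^ 2 = Real.exp 1 := by
      rw [pow_two, ← mul_assoc, he, one_mul]
    have he3 : Real.exp (-1) * Real.exp 1 ^ 2 * t = Real.exp 1 * t := by rw [he2]
    nlinarith [mul_le_mul_of_nonneg_left h3 (by positivity : (0:ℝ) ≤ Real.exp (-1) * t),
      he3, ht0, Real.exp_pos (-1)]
  have step3 : Real.exp 1 / (2 * π * t) ≤ Real.exp 1 / (2 * π * ζ * Real.sqrt n) := by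
    apply div_le_div_of_nonneg_left (Real.exp_pos 1).le (by positivity)
    calc 2 * π * ζ * Real.sqrt n ≤ 2 * π * ζ * n := by
          nlinarith [mul_le_mul_of_nonneg_left hsn (by positivity : (0:ℝ) ≤ 2*π*ζ)]
      _ = 2 * π * t := by rw [htdef]; ring
  have step4 : Real.exp 1 / (2 * π * ζ * Real.sqrt n)
      ≤ (Real.exp 1 / (2 * π * ζ * Real.sqrt n)) * (1 + 1 / (ζ * n)) := by
    apply le_mul_of_one_le_right (by positivity)
    have : 0 < 1 / (ζ * (n:ℝ)) := by positivity
    linarith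
  calc (1-ζ)^n ≤ Real.exp (-t) := h1
    _ ≤ Real.exp (-1) / t := step1
    _ ≤ Real.exp 1 / (2 * π * t) := step2
    _ ≤ Real.exp 1 / (2 * π * ζ * Real.sqrt n) := step3
    _ ≤ _ := step4

lemma final_compare (a b ζ nn : ℝ) (ha0 : 0 < a) (hb0 : 0 < b) (hnn : nn = a + b)
    (hζ0 : 0 < ζ) (hkey : (ζ*nn)^4 ≤ a*b*((ζ*nn)+1)^2) :
    Real.exp 1 * Real.sqrt nn / (2*π*(Real.sqrt a * Real.sqrt b))
      ≤ (Real.exp 1 / (2 * π * ζ * Real.sqrt nn)) * (1 + 1 / (ζ * nn)) := by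
  have hnn0 : 0 < nn := by rw [hnn]; linarith
  set t : ℝ := ζ * nn with htdef
  have ht0 : 0 < t := by positivity
  have hpi : (0:ℝ) < π := Real.pi_pos
  set s : ℝ := Real.sqrt a * Real.sqrt b with hsdef
  have hs0 : 0 < s := by rw [hsdef]; positivity
  have hs2 : s * s = a * b := by
    rw [hsdef]
    calc Real.sqrt a * Real.sqrt b * (Real.sqrt a * Real.sqrt b)
        = (Real.sqrt a * Real.sqrt a) * (Real.sqrt b * Real.sqrt b) := by ring
      _ = a * b := by rw [Real.mul_self_sqrt ha0.le, Real.mul_self_sqrt hb0.le]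
  have h5 : t^2 ≤ s * (t+1) := by
    nlinarith [hkey, hs2, hs0, ht0, mul_pos hs0 (by positivity : (0:ℝ) < t+1),
      sq_nonneg (s*(t+1) - t^2), sq_nonneg (s*(t+1) + t^2)]
  have hr : Real.sqrt nn * Real.sqrt nn = nn := Real.mul_self_sqrt hnn0.le
  have hr0 : 0 < Real.sqrt nn := Real.sqrt_pos.2 hnn0
  have hRHS : (Real.exp 1 / (2 * π * ζ * Real.sqrt nn)) * (1 + 1 / (ζ * nn))
      = Real.exp 1 * (t+1) / (2 * π * ζ * Real.sqrt nn * t) := by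
    rw [htdef]; field_simp
  rw [hRHS, div_le_div_iff₀ (by positivity) (by positivity)]
  have hmain : ζ * (Real.sqrt nn * Real.sqrt nn) * t = t^2 := by
    rw [hr, htdef]; ring
  nlinarith [mul_le_mul_of_nonneg_left h5
      (by positivity : (0:ℝ) ≤ Real.exp 1 * (2*π) * Real.sqrt nn), hmain, hr0, hr,
    mul_pos (Real.exp_pos 1) (mul_pos hpi hr0)]


theorem stmt6 (n : ℕ) (hn : 1 ≤ n) (ζ p : ℝ) (hζ0 : 0 < ζ) (hζ : ζ < 1 / 2)
    (hpl : ζ ≤ p) (hpu : p ≤ 1 - ζ) (k : ℕ) :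
    binomProb n p k ≤
      (Real.exp 1 / (2 * Real.pi * ζ * Real.sqrt n)) * (1 + 1 / (ζ * n)) := by
  have hn0 : (0:ℝ) < n := by exact_mod_cast hn
  have hp0 : (0:ℝ) < p := lt_of_lt_of_le hζ0 hpl
  have hp1 : p < 1 := by linarith
  have hq0 : (0:ℝ) < 1 - p := by linarith
  set M := Nat.floor (((n:ℝ)+1) * p) with hMdef
  have hmode := binom_le_mode n p hp0 hp1 k
  rw [← hMdef] at hmode
  have hMle : (M:ℝ) ≤ ((n:ℝ)+1) * p := Nat.floor_le (by positivity)
  have hMgt : ((n:ℝ)+1) * p < (M:ℝ) + 1 := Nat.lt_floor_add_one _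
  have hMn : M ≤ n := by
    have h1 : ((n:ℝ)+1)*p < (n:ℝ)+1 := by nlinarith
    have h2 : (M:ℝ) < (n:ℝ)+1 := lt_of_le_of_lt hMle h1
    exact_mod_cast Nat.lt_succ_iff.mp (by exact_mod_cast h2)
  refine le_trans hmode ?_
  by_cases hM0 : M = 0
  · rw [hM0]
    have hval : binomProb n p 0 = (1-p)^n := by unfold binomProb; simp
    rw [hval]
    calc (1-p)^n ≤ (1-ζ)^n := by
          apply pow_le_pow_left₀ hq0.le (by linarith) n
      _ ≤ _ := edge_bound n hn ζ hζ0 hζ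
  by_cases hMeqn : M = n
  · rw [hMeqn]
    have hval : binomProb n p n = p^n := by unfold binomProb; simp
    rw [hval]
    calc p^n ≤ (1-ζ)^n := by
          apply pow_le_pow_left₀ hp0.le hpu n
      _ ≤ _ := edge_bound n hn ζ hζ0 hζ
  -- main case 1 ≤ M ≤ n-1
  have ha1 : 1 ≤ M := by omega
  have hb1 : 1 ≤ n - M := by omega
  set a := M with hadef
  set b := n - M with hbdef
  have hab : a + b = n := by omega
  have hbcast : ((b:ℕ):ℝ) = (n:ℝ) - (M:ℝ) := by
    rw [hbdef, Nat.cast_sub hMn]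
  have hcastn : ((a:ℝ) + (b:ℝ)) = (n:ℝ) := by
    rw [hbcast, hadef]; ring
  have hpmf : binomProb n p M = ((a+b).choose a : ℝ) * (p^a * (1-p)^b) := by
    unfold binomProb
    rw [hab]
    have : n - M = b := rfl
    rw [this]
    ring
  have ht0 : 0 < ζ * (n:ℝ) := by positivity
  have hkey : (ζ*((a:ℝ)+(b:ℝ)))^4 ≤ (a:ℝ)*(b:ℝ)*((ζ*((a:ℝ)+(b:ℝ)))+1)^2 := by
    rw [hcastn]
    apply key_ineq (ζ*(n:ℝ)) ((a:ℝ)) ((b:ℝ)) ((n:ℝ)) ht0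
    · nlinarith
    · rw [hcastn]
    · exact_mod_cast ha1
    · exact_mod_cast hb1
    · -- ζn - 1 ≤ a
      have h3 : ((n:ℝ)+1)*ζ ≤ ((n:ℝ)+1)*p := by nlinarith
      have : (M:ℝ) > ((n:ℝ)+1)*p - 1 := by linarith
      rw [hadef]
      nlinarith
    · -- ζn - 1 ≤ b
      have h3 : ((n:ℝ)+1)*p ≤ ((n:ℝ)+1)*(1-ζ) := by nlinarith
      rw [hbcast]
      nlinarith
  have ha0' : (0:ℝ) < (a:ℝ) := by exact_mod_cast ha1
  have hb0' : (0:ℝ) < (b:ℝ) := by exact_mod_cast hb1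
  calc binomProb n p M
      ≤ ((a+b).choose a : ℝ) * (((a:ℝ)/((a:ℝ)+b))^a * ((b:ℝ)/((a:ℝ)+b))^b) := by
        rw [hpmf]
        apply mul_le_mul_of_nonneg_left (pow_prob_le a b ha1 hb1 p hp0.le hp1.le)
          (by positivity)
    _ ≤ Real.exp 1 * Real.sqrt ((a:ℝ)+(b:ℝ)) / (2*π*(Real.sqrt a * Real.sqrt b)) :=
        choose_bound a b ha1 hb1
    _ ≤ (Real.exp 1 / (2 * π * ζ * Real.sqrt ((a:ℝ)+(b:ℝ)))) * (1 + 1 / (ζ * ((a:ℝ)+(b:ℝ)))) :=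
        final_compare (a:ℝ) (b:ℝ) ζ ((a:ℝ)+(b:ℝ)) ha0' hb0' rfl hζ0 hkey
    _ = (Real.exp 1 / (2 * Real.pi * ζ * Real.sqrt n)) * (1 + 1 / (ζ * n)) := by
        rw [hcastn]
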